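/- Let q = p^d with p prime and d ≥ 1, let C be a code in the Hamming graph H(m,q), and let X ≤ Aut(C) be such that C is X-alphabet-affine. Let G = ∏_{i∈M} K^{Q_i} ≤ B be the direct product over the entries of the induced groups K^{Q_i}, and let T = ∏_{i∈M} T_i ≤ B. Then T is a normal p-subgroup of G that contains every normal p-subgroup of G (so T is the largest normal p-subgroup O_p(G) of G), and T acts regularly on the vertex set V of H(m,q), i.e., for all vertices u,v there is exactly one element of T mapping u to v. -/

import Mathlib

open Equiv

namespace Paper

/-- A Hamming-graph automorphism of `Fin m → Q` given by entrywise permutations `h`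
and a permutation `σ` of the entries. -/
def IsQAutPair {m : ℕ} {Q : Type*} (g : Perm (Fin m → Q)) (h : Fin m → Perm Q)
    (σ : Perm (Fin m)) : Prop :=
  ∀ α i, g α i = h i (α (σ.symm i))

/-- `g` is an automorphism of the Hamming graph `H(m,q)`. -/
def IsQAut {m : ℕ} {Q : Type*} (g : Perm (Fin m → Q)) : Prop :=
  ∃ h σ, IsQAutPair g h σ

/-- The permutation group `X_i^{Q_i}` induced on the alphabet in entry `i`
by the stabiliser in `X` of the entry `i`. -/
def indQ {m : ℕ} {Q : Type*} (X : Set (Perm (Fin m → Q))) (i : Fin m) : Set (Perm Q) :=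
  {π | ∃ g ∈ X, ∃ h σ, IsQAutPair g h σ ∧ σ i = i ∧ h i = π}

/-- `C_s`, the set of vertices at Hamming distance exactly `s` from the code `C`. -/
def distSet {m : ℕ} {Q : Type*} [DecidableEq Q] (C : Set (Fin m → Q)) (s : ℕ) :
    Set (Fin m → Q) :=
  {v | (∃ c ∈ C, hammingDist v c = s) ∧ ∀ c ∈ C, s ≤ hammingDist v c}

/-- `C` is `(X,s)`-neighbour-transitive: `X` acts transitively on each of
`C = C_0, C_1, …, C_s`. -/
def NbrTrans {m : ℕ} {Q : Type*} [DecidableEq Q] (X : Set (Perm (Fin m → Q)))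
    (C : Set (Fin m → Q)) (s : ℕ) : Prop :=
  ∀ j ≤ s, ∀ u ∈ distSet C j, ∀ v ∈ distSet C j, ∃ g ∈ X, g u = v

/-- `δ` is the minimum distance of the code `C`. -/
def IsMinDist {m : ℕ} {Q : Type*} [DecidableEq Q] (C : Set (Fin m → Q)) (δ : ℕ) : Prop :=
  (∃ u ∈ C, ∃ v ∈ C, u ≠ v ∧ hammingDist u v = δ) ∧
  ∀ u ∈ C, ∀ v ∈ C, u ≠ v → δ ≤ hammingDist u v

/-- The alphabet `Q = F_p^d`. -/
abbrev QA (p d : ℕ) : Type := Fin d → ZMod p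

/-- The vertex set `V = (F_p^d)^M` of `H(m, p^d)`. -/
abbrev VA (p d m : ℕ) : Type := Fin m → QA p d

/-- The subgroup of `Sym(A)` consisting of all translations `v ↦ v + a`. -/
def TransSub (A : Type*) [AddCommGroup A] : Subgroup (Perm A) where
  carrier := {g : Perm A | ∃ a : A, ∀ v, g v = v + a}
  one_mem' := ⟨0, fun v => by simp⟩
  mul_mem' := fun {f g} hf hg => by
    obtain ⟨a, ha⟩ := hf
    obtain ⟨b, hb⟩ := hg
    exact ⟨b + a, fun v => by rw [Perm.mul_apply, hb, ha, add_assoc]⟩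
  inv_mem' := fun {f} hf => by
    obtain ⟨a, ha⟩ := hf
    refine ⟨-a, fun v => ?_⟩
    have h1 : f (v + -a) = v := by rw [ha]; abel
    calc f⁻¹ v = f⁻¹ (f (v + -a)) := by rw [h1]
      _ = v + -a := by first | exact f.symm_apply_apply (v + -a) | simp

/-- `K = X ∩ B`, the kernel of the action of `X` on the set of entries `M`:
the elements of `X` acting entrywise (with trivial permutation of `M`). -/
def KSet {p d m : ℕ} (X : Set (Perm (VA p d m))) : Set (Perm (VA p d m)) :=
  {g | g ∈ X ∧ ∃ h, IsQAutPair g h 1}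

/-- The group `K^{Q_i}` induced on the alphabet in entry `i` by `K = X ∩ B`. -/
def indK {p d m : ℕ} (X : Set (Perm (VA p d m))) (i : Fin m) : Set (Perm (QA p d)) :=
  {π | ∃ g ∈ X, ∃ h, IsQAutPair g h 1 ∧ h i = π}

/-- `C` is `X`-alphabet-affine: `X ≤ Aut(C)`, `K ≠ 1`, `X` is transitive on the entries,
and each `X_i^{Q_i}` is an affine 2-transitive group, i.e. it is 2-transitive on `Q_i`
and contains the translation group `T_i` as a normal subgroup. -/
def AlphabetAffine {p d m : ℕ} (X : Set (Perm (VA p d m))) (C : Set (VA p d m)) : Prop :=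
  (∀ g ∈ X, IsQAut g) ∧
  (∀ g ∈ X, g '' C = C) ∧
  (∃ g ∈ KSet X, g ≠ 1) ∧
  (∀ i j : Fin m, ∃ g ∈ X, ∃ h σ, IsQAutPair g h σ ∧ σ i = j) ∧
  (∀ i : Fin m,
    (∀ a b a' b' : QA p d, a ≠ b → a' ≠ b' → ∃ π ∈ indQ X i, π a = a' ∧ π b = b') ∧
    ((TransSub (QA p d) : Set (Perm (QA p d))) ⊆ indQ X i) ∧
    (∀ π ∈ indQ X i, ∀ t ∈ TransSub (QA p d), π * t * π⁻¹ ∈ TransSub (QA p d)))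


/-- The group `G = ∏_{i ∈ M} K^{Q_i} ≤ B`. -/
def GProd {p d m : ℕ} (X : Set (Perm (VA p d m))) : Set (Perm (VA p d m)) :=
  {g | ∃ h, IsQAutPair g h 1 ∧ ∀ i, h i ∈ indK X i}

theorem Perm.inv_apply_self {α : Type*} (f : Perm α) (x : α) : f⁻¹ (f x) = x :=
  f.symm_apply_apply x

theorem Perm.apply_inv_self {α : Type*} (f : Perm α) (x : α) : f (f⁻¹ x) = x :=
  f.apply_symm_apply x

section Pairs
variable {m : ℕ} {Q : Type*}

lemma pair_one : IsQAutPair (1 : Perm (Fin m → Q)) (fun _ => 1) 1 := fun _ _ => rfl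

lemma pair_apply {g : Perm (Fin m → Q)} {h : Fin m → Perm Q} {σ : Perm (Fin m)}
    (H : IsQAutPair g h σ) (α : Fin m → Q) (i : Fin m) :
    g α i = h i (α (σ.symm i)) := H α i

lemma pair_apply1 {g : Perm (Fin m → Q)} {h : Fin m → Perm Q}
    (H : IsQAutPair g h 1) (α : Fin m → Q) (i : Fin m) :
    g α i = h i (α i) := H α i

lemma pair_mul {g g' : Perm (Fin m → Q)} {h h' : Fin m → Perm Q} {σ σ' : Perm (Fin m)}
    (H : IsQAutPair g h σ) (H' : IsQAutPair g' h' σ') :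
    IsQAutPair (g * g') (fun j => h j * h' (σ.symm j)) (σ * σ') := by
  intro α j
  show g (g' α) j = h j (h' (σ.symm j) (α (σ'.symm (σ.symm j))))
  rw [pair_apply H, pair_apply H']

lemma pair_inv {g : Perm (Fin m → Q)} {h : Fin m → Perm Q} {σ : Perm (Fin m)}
    (H : IsQAutPair g h σ) :
    IsQAutPair g⁻¹ (fun j => (h (σ j))⁻¹) σ⁻¹ := by
  intro β j
  show g⁻¹ β j = (h (σ j))⁻¹ (β (σ j))
  have hα : g (fun l => (h (σ l))⁻¹ (β (σ l))) = β := by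
    funext k
    rw [pair_apply H]
    simp
  have h2 := congrArg (fun z => g⁻¹ z) hα
  simp only [Perm.inv_apply_self] at h2
  rw [← h2]

lemma pair_inv_apply {g : Perm (Fin m → Q)} {h : Fin m → Perm Q} {σ : Perm (Fin m)}
    (H : IsQAutPair g h σ) (β : Fin m → Q) (j : Fin m) :
    g⁻¹ β j = (h (σ j))⁻¹ (β (σ j)) := pair_inv H β j

lemma pair1_mul {g g' : Perm (Fin m → Q)} {h h' : Fin m → Perm Q}
    (H : IsQAutPair g h 1) (H' : IsQAutPair g' h' 1) :
    IsQAutPair (g * g') (fun j => h j * h' j) 1 := by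
  intro α j
  show g (g' α) j = h j (h' j (α j))
  rw [pair_apply1 H, pair_apply1 H']

lemma pair1_inv {g : Perm (Fin m → Q)} {h : Fin m → Perm Q}
    (H : IsQAutPair g h 1) :
    IsQAutPair g⁻¹ (fun j => (h j)⁻¹) 1 := pair_inv H

lemma pair1_pow {g : Perm (Fin m → Q)} {h : Fin m → Perm Q}
    (H : IsQAutPair g h 1) (n : ℕ) : IsQAutPair (g ^ n) (fun i => h i ^ n) 1 := by
  induction n with
  | zero =>
    intro α i
    show (g ^ 0) α i = (h i ^ 0) (α i)
    simp
  | succ n ih =>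
    intro α i
    show (g ^ (n + 1)) α i = (h i ^ (n + 1)) (α i)
    have e1 : (g ^ (n + 1)) α i = (g ^ n) (g α) i := by rw [pow_succ]; rfl
    have e2 : (h i ^ (n + 1)) (α i) = (h i ^ n) (h i (α i)) := by rw [pow_succ]; rfl
    rw [e1, e2, pair_apply1 ih, pair_apply1 H]

lemma pair_eq_at {g : Perm (Fin m → Q)} {h h' : Fin m → Perm Q}
    (H : IsQAutPair g h 1) (H' : IsQAutPair g h' 1) (i : Fin m) : h i = h' i := by
  apply Equiv.ext; intro x
  have e1 : g (fun _ => x) i = h i x := pair_apply1 H _ i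
  have e2 : g (fun _ => x) i = h' i x := pair_apply1 H' _ i
  rw [e1] at e2; exact e2

end Pairs

section Trans
variable {A : Type*} [AddCommGroup A]

lemma addRight_mem_transSub (a : A) : Equiv.addRight a ∈ TransSub A := ⟨a, fun _ => rfl⟩

lemma transSub_inv_apply {t : Perm A} {a : A} (h : ∀ v, t v = v + a) (y : A) :
    t⁻¹ y = y - a := by
  apply t.injective
  rw [Perm.apply_inv_self, h, sub_add_cancel]

lemma transSub_pow_apply {t : Perm A} {a : A} (h : ∀ v, t v = v + a) (n : ℕ) :
    ∀ v, (t ^ n) v = v + n • a := by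
  induction n with
  | zero => intro v; simp
  | succ n ih =>
    intro v
    have e1 : (t ^ (n + 1)) v = (t ^ n) (t v) := by rw [pow_succ]; rfl
    rw [e1, h v, ih, succ_nsmul]
    abel

lemma isPGroup_transSub (p : ℕ) (hA : ∀ a : A, p • a = 0) : IsPGroup p (TransSub A) := by
  rintro ⟨t, ht⟩
  obtain ⟨a, ha⟩ := ht
  refine ⟨1, Subtype.ext ?_⟩
  show t ^ p ^ 1 = 1
  apply Equiv.ext; intro v
  rw [transSub_pow_apply ha (p ^ 1) v, pow_one, hA, add_zero]
  rfl

variable {G : Subgroup (Perm A)}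

lemma aff_of_norm (hnormT : ∀ π ∈ G, ∀ t ∈ TransSub A, π * t * π⁻¹ ∈ TransSub A)
    {π : Perm A} (hπ : π ∈ G) : ∀ w a : A, π (w + a) = π w + (π a - π 0) := by
  have key : ∀ a : A, ∃ b : A, ∀ w, π (w + a) = π w + b := by
    intro a
    obtain ⟨b, hb⟩ := hnormT π hπ (Equiv.addRight a) (addRight_mem_transSub a)
    refine ⟨b, fun w => ?_⟩
    have := hb (π w)
    simp only [Perm.mul_apply, Perm.inv_apply_self] at this
    exact this
  intro w a
  obtain ⟨b, hb⟩ := key a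
  have h3 : π a = π 0 + b := by have := hb 0; rwa [zero_add] at this
  rw [hb w, h3]
  abel

lemma lemA {N : Subgroup (Perm A)}
    (h2t : ∀ a b a' b' : A, a ≠ b → a' ≠ b' → ∃ π ∈ G, π a = a' ∧ π b = b')
    (hTG : (TransSub A : Set (Perm A)) ⊆ ↑G)
    (hnormT : ∀ π ∈ G, ∀ t ∈ TransSub A, π * t * π⁻¹ ∈ TransSub A)
    (hNG : (N : Set (Perm A)) ⊆ ↑G)
    (hNnorm : ∀ π ∈ G, ∀ n ∈ N, π * n * π⁻¹ ∈ N)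
    (hNne : ∃ n ∈ N, n ≠ 1) :
    (TransSub A : Set (Perm A)) ⊆ ↑N := by
  obtain ⟨n, hnN, hn1⟩ := hNne
  have hnG : n ∈ G := hNG hnN
  have affn := aff_of_norm hnormT hnG
  have affninv := aff_of_norm hnormT (G.inv_mem hnG)
  have key : ∃ c : A, c ≠ 0 ∧ ∃ τ, τ ∈ N ∧ ∀ v, τ v = v + c := by
    by_cases hall : ∀ a : A, n a = a + n 0
    · refine ⟨n 0, fun h0 => hn1 ?_, n, hnN, hall⟩
      apply Equiv.ext; intro v
      rw [hall v, h0, add_zero]; rfl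
    · push_neg at hall
      obtain ⟨a, ha⟩ := hall
      set t : Perm A := Equiv.addRight a with htdef
      have htmem : t ∈ TransSub A := addRight_mem_transSub a
      have htG : t ∈ G := hTG htmem
      have hτN : n⁻¹ * (t⁻¹ * n * t) ∈ N := by
        have h1 : t⁻¹ * n * (t⁻¹)⁻¹ ∈ N := hNnorm t⁻¹ (G.inv_mem htG) n hnN
        rw [inv_inv] at h1
        exact N.mul_mem (N.inv_mem hnN) h1
      set c : A := n⁻¹ (n a - n 0 - a) - n⁻¹ 0 with hcdef
      have hc0 : c ≠ 0 := by
        intro h0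
        apply ha
        have : n⁻¹ (n a - n 0 - a) = n⁻¹ 0 := by
          have := sub_eq_zero.mp h0; exact this
        have h2 : n a - n 0 - a = 0 := n⁻¹.injective this
        have h3 : n a = n 0 + a := by
          have := sub_eq_zero.mp (by rwa [sub_sub] at h2)
          exact this
        rw [h3, add_comm]
      refine ⟨c, hc0, n⁻¹ * (t⁻¹ * n * t), hτN, fun v => ?_⟩
      have e0 : (n⁻¹ * (t⁻¹ * n * t)) v = n⁻¹ (t⁻¹ (n (t v))) := rfl
      have e1 : t v = v + a := rfl
      have e2 : n (v + a) = n v + (n a - n 0) := affn v a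
      have e3 : t⁻¹ (n v + (n a - n 0)) = n v + (n a - n 0 - a) := by
        rw [transSub_inv_apply (fun w => rfl : ∀ w, t w = w + a)]
        abel
      have e4 : n⁻¹ (n v + (n a - n 0 - a)) = v + (n⁻¹ (n a - n 0 - a) - n⁻¹ 0) := by
        rw [affninv (n v) (n a - n 0 - a), Perm.inv_apply_self]
      rw [e0, e1, e2, e3, e4]
  obtain ⟨c, hc0, τ, hτN, hτ⟩ := key
  intro x hx
  obtain ⟨e, he⟩ := hx
  by_cases he0 : e = 0
  · have : x = 1 := by
      apply Equiv.ext; intro v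
      rw [he v, he0, add_zero]; rfl
    rw [this]
    exact N.one_mem
  · obtain ⟨π, hπG, hπc, hπ0⟩ := h2t c 0 e 0 hc0 he0
    have hconj : π * τ * π⁻¹ ∈ N := hNnorm π hπG τ hτN
    have hxeq : x = π * τ * π⁻¹ := by
      apply Equiv.ext; intro v
      have e0 : (π * τ * π⁻¹) v = π (τ (π⁻¹ v)) := rfl
      rw [e0, hτ (π⁻¹ v), aff_of_norm hnormT hπG (π⁻¹ v) c, Perm.apply_inv_self,
        hπc, hπ0, he v]
      abel
    rw [hxeq]
    exact hconj

end Trans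

section Key

variable {p : ℕ} {A : Type*} [AddCommGroup A] [Finite A]

lemma lemKey (hp : p.Prime) {dd : ℕ} (hdd : 1 ≤ dd) (hcard : Nat.card A = p ^ dd)
    {G K S : Subgroup (Perm A)}
    (h2t : ∀ a b a' b' : A, a ≠ b → a' ≠ b' → ∃ π ∈ G, π a = a' ∧ π b = b')
    (hTG : (TransSub A : Set (Perm A)) ⊆ ↑G)
    (hnormT : ∀ π ∈ G, ∀ t ∈ TransSub A, π * t * π⁻¹ ∈ TransSub A)
    (hKG : K ≤ G)
    (hKnorm : ∀ π ∈ G, ∀ k ∈ K, π * k * π⁻¹ ∈ K)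
    (hTK : TransSub A ≤ K)
    (hSK : S ≤ K) (hSp : IsPGroup p S)
    (hSnorm : ∀ k ∈ K, ∀ s ∈ S, k * s * k⁻¹ ∈ S)
    (hA : ∀ a : A, p • a = 0) :
    S ≤ TransSub A := by
  haveI : Fact p.Prime := ⟨hp⟩
  classical
  -- the set of elements of normal p-subgroups of K
  set gens : Set ↥K := {x | ∃ N : Subgroup ↥K, N.Normal ∧ IsPGroup p N ∧ x ∈ N} with hgens
  set OK : Subgroup ↥K := Subgroup.closure gens with hOK
  obtain ⟨P1⟩ : Nonempty (Sylow p ↥K) := inferInstance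
  -- every normal p-subgroup of K is contained in P1
  have hgen_le : ∀ x ∈ gens, x ∈ (P1 : Subgroup ↥K) := by
    rintro x ⟨N, hNn, hNp, hxN⟩
    obtain ⟨P2, hNP2⟩ := hNp.exists_le_sylow
    obtain ⟨k, hk⟩ := MulAction.exists_smul_eq (↥K) P2 P1
    have h1 : k⁻¹ * x * k ∈ N := by
      have := hNn.conj_mem x hxN k⁻¹
      simpa [mul_assoc] using this
    have h2 : k⁻¹ * x * k ∈ (P2 : Subgroup ↥K) := hNP2 h1
    rw [← hk]
    show x ∈ ((k • P2 : Sylow p ↥K) : Subgroup ↥K)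
    rw [Sylow.coe_subgroup_smul, Subgroup.mem_smul_pointwise_iff_exists]
    refine ⟨k⁻¹ * x * k, h2, ?_⟩
    simp only [MulAut.smul_def, MulAut.conj_apply]
    group
  have hOKle : OK ≤ (P1 : Subgroup ↥K) := (Subgroup.closure_le _).mpr hgen_le
  have hOKp : IsPGroup p OK := P1.isPGroup'.to_le hOKle
  set O : Subgroup (Perm A) := OK.map K.subtype with hO
  have hOp : IsPGroup p O := hOKp.map K.subtype
  have hOleK : O ≤ K := Subgroup.map_subtype_le OK
  have hmemO : ∀ (N : Subgroup ↥K), N.Normal → IsPGroup p N →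
      ∀ y : ↥K, y ∈ N → (y : Perm A) ∈ O := by
    intro N hNn hNp y hy
    exact Subgroup.mem_map.mpr ⟨y, Subgroup.subset_closure ⟨N, hNn, hNp, hy⟩, rfl⟩
  -- S ≤ O
  have hSO : S ≤ O := by
    intro x hx
    have hNn : (S.subgroupOf K).Normal := by
      constructor
      intro n hn k
      rw [Subgroup.mem_subgroupOf] at hn ⊢
      have := hSnorm (k : Perm A) k.2 (n : Perm A) hn
      simpa using this
    have hNp : IsPGroup p (S.subgroupOf K) :=
      hSp.of_equiv (Subgroup.subgroupOfEquivOfLe hSK).symm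
    exact hmemO _ hNn hNp ⟨x, hSK hx⟩ (Subgroup.mem_subgroupOf.mpr hx)
  -- T ≤ O
  have hTO : TransSub A ≤ O := by
    intro x hx
    have hNn : ((TransSub A).subgroupOf K).Normal := by
      constructor
      intro n hn k
      rw [Subgroup.mem_subgroupOf] at hn ⊢
      have := hnormT (k : Perm A) (hKG k.2) (n : Perm A) hn
      simpa using this
    have hNp : IsPGroup p ((TransSub A).subgroupOf K) :=
      (isPGroup_transSub p hA).of_equiv (Subgroup.subgroupOfEquivOfLe hTK).symm
    exact hmemO _ hNn hNp ⟨x, hTK hx⟩ (Subgroup.mem_subgroupOf.mpr hx)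
  -- O is normalized by G
  have hOnorm : ∀ g ∈ G, ∀ x ∈ O, g * x * g⁻¹ ∈ O := by
    intro g hg x hx
    obtain ⟨y, hy, rfl⟩ := Subgroup.mem_map.mp hx
    -- conjugation by g as an automorphism of K
    have hconjmem : ∀ k : ↥K, g * (k : Perm A) * g⁻¹ ∈ K := fun k => hKnorm g hg k k.2
    have hconjmem' : ∀ k : ↥K, g⁻¹ * (k : Perm A) * g ∈ K := by
      intro k
      have := hKnorm g⁻¹ (G.inv_mem hg) (k : Perm A) k.2
      simpa using this
    set φ : ↥K ≃* ↥K :=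
      { toFun := fun k => ⟨g * (k : Perm A) * g⁻¹, hconjmem k⟩
        invFun := fun k => ⟨g⁻¹ * (k : Perm A) * g, hconjmem' k⟩
        left_inv := fun k => by
          apply Subtype.ext
          show g⁻¹ * (g * (k : Perm A) * g⁻¹) * g = (k : Perm A)
          group
        right_inv := fun k => by
          apply Subtype.ext
          show g * (g⁻¹ * (k : Perm A) * g) * g⁻¹ = (k : Perm A)
          group
        map_mul' := fun k l => by
          apply Subtype.ext
          show g * ((k : Perm A) * (l : Perm A)) * g⁻¹
            = (g * (k : Perm A) * g⁻¹) * (g * (l : Perm A) * g⁻¹)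
          group } with hφ
    have hφcoe : ∀ k : ↥K, ((φ k : ↥K) : Perm A) = g * (k : Perm A) * g⁻¹ := fun _ => rfl
    suffices h : φ y ∈ OK by
      have : ((φ y : ↥K) : Perm A) ∈ O := Subgroup.mem_map.mpr ⟨φ y, h, rfl⟩
      rwa [hφcoe] at this
    refine Subgroup.closure_induction ?_ ?_ ?_ ?_ hy
    · rintro z ⟨N, hNn, hNp, hzN⟩
      apply Subgroup.subset_closure
      refine ⟨N.map φ.toMonoidHom, ?_, hNp.map φ.toMonoidHom, Subgroup.mem_map.mpr ⟨z, hzN, rfl⟩⟩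
      constructor
      rintro n' hn' k
      obtain ⟨n, hn, rfl⟩ := Subgroup.mem_map.mp hn'
      refine Subgroup.mem_map.mpr ⟨φ.symm k * n * (φ.symm k)⁻¹, hNn.conj_mem n hn _, ?_⟩
      simp [map_mul]
    · simpa using OK.one_mem
    · intro a b _ _ ha hb
      rw [map_mul]
      exact OK.mul_mem ha hb
    · intro a _ ha
      rw [map_inv]
      exact OK.inv_mem ha
  -- fixed points of the point stabilizer in O
  have hRfix : ∀ v : A, ∀ ρ ∈ O, ρ 0 = 0 → ρ v = v := by
    set R : Subgroup (Perm A) := O ⊓ MulAction.stabilizer (Perm A) (0 : A) with hR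
    have hRp : IsPGroup p R := hOp.to_le inf_le_left
    set F : Set A := MulAction.fixedPoints ↥R A with hF
    have hmemF : ∀ v : A, v ∈ F ↔ ∀ ρ ∈ O, ρ 0 = 0 → ρ v = v := by
      intro v
      constructor
      · intro hv ρ hρO hρ0
        have : (⟨ρ, hρO, hρ0⟩ : ↥R) • v = v := hv _
        exact this
      · intro hv r
        obtain ⟨ρ, hρO, hρ0⟩ := r
        exact hv ρ hρO hρ0
    have h0F : (0 : A) ∈ F := by
      rw [hmemF]; intro ρ _ hρ0; exact hρ0
    -- F is invariant under the stabilizer of 0 in G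
    have hFinv : ∀ g ∈ G, g 0 = 0 → ∀ v ∈ F, g v ∈ F := by
      intro g hg hg0 v hv
      rw [hmemF]
      intro ρ hρO hρ0
      have hρ' : g⁻¹ * ρ * g ∈ O := by
        have := hOnorm g⁻¹ (G.inv_mem hg) ρ hρO
        simpa using this
      have h00 : g⁻¹ 0 = 0 := by
        apply g.injective
        rw [Perm.apply_inv_self, hg0]
      have hρ'0 : (g⁻¹ * ρ * g) 0 = 0 := by
        show g⁻¹ (ρ (g 0)) = 0
        rw [hg0, hρ0, h00]
      have := (hmemF v).mp hv _ hρ' hρ'0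
      have h2 : g⁻¹ (ρ (g v)) = v := this
      calc ρ (g v) = g (g⁻¹ (ρ (g v))) := (Perm.apply_inv_self g _).symm
        _ = g v := by rw [h2]
    -- there is a nonzero fixed point
    have hcardF : p ∣ Nat.card F := by
      have hmod := hRp.card_modEq_card_fixedPoints A
      have h1 : p ∣ Nat.card A := by
        rw [hcard]; exact dvd_pow_self p (by omega)
      have h2 : Nat.card A ≡ 0 [MOD p] := (Nat.modEq_zero_iff_dvd).mpr h1
      exact (Nat.modEq_zero_iff_dvd).mp (hmod.symm.trans h2)
    haveI : Nonempty ↥F := ⟨⟨0, h0F⟩⟩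
    have hcardpos : 0 < Nat.card ↥F := Nat.card_pos
    have h1lt : 1 < Nat.card ↥F :=
      lt_of_lt_of_le hp.one_lt (Nat.le_of_dvd hcardpos hcardF)
    haveI : Nontrivial ↥F := Finite.one_lt_card_iff_nontrivial.mp h1lt
    obtain ⟨v0', hv0'⟩ := exists_ne (⟨0, h0F⟩ : ↥F)
    have hv0F : (v0' : A) ∈ F := v0'.2
    have hv0ne : (v0' : A) ≠ 0 := fun h => hv0' (Subtype.ext h)
    -- every point is in F
    have hFall : ∀ v : A, v ∈ F := by
      intro v
      by_cases hv : v = 0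
      · rw [hv]; exact h0F
      · obtain ⟨π, hπG, hπ1, hπ2⟩ := h2t (v0' : A) 0 v 0 hv0ne hv
        have := hFinv π hπG hπ2 _ hv0F
        rwa [hπ1] at this
    intro v ρ hρO hρ0
    exact (hmemF v).mp (hFall v) ρ hρO hρ0
  -- conclude
  intro x hx
  have hxO : x ∈ O := hSO hx
  set t : Perm A := Equiv.addRight (x 0) with ht
  have htT : t ∈ TransSub A := addRight_mem_transSub _
  have hρO : t⁻¹ * x ∈ O := O.mul_mem (O.inv_mem (hTO htT)) hxO
  have hρ0 : (t⁻¹ * x) 0 = 0 := by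
    show t⁻¹ (x 0) = 0
    rw [transSub_inv_apply (fun v => rfl : ∀ v, t v = v + x 0)]
    exact sub_self _
  have hρ1 : t⁻¹ * x = 1 := by
    apply Equiv.ext; intro v
    have := hRfix v _ hρO hρ0
    simpa using this
  have hxt : x = t := by
    have := congrArg (fun z => t * z) hρ1
    simpa [mul_assoc] using this
  rw [hxt]
  exact htT

end Key

section Groups
variable {p d m : ℕ} (X : Subgroup (Perm (VA p d m))) (i : Fin m)

/-- `X_i^{Q_i}` as a subgroup. -/
def indQSub : Subgroup (Perm (QA p d)) where
  carrier := indQ (X : Set (Perm (VA p d m))) i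
  one_mem' := ⟨1, X.one_mem, fun _ => 1, 1, pair_one, rfl, rfl⟩
  mul_mem' := by
    rintro a b ⟨g, hg, h, σ, Hp, hσ, hh⟩ ⟨g', hg', h', σ', Hp', hσ', hh'⟩
    have hsymm : σ.symm i = i := by rw [Equiv.symm_apply_eq, hσ]
    refine ⟨g * g', X.mul_mem hg hg', _, _, pair_mul Hp Hp', ?_, ?_⟩
    · show σ (σ' i) = i
      rw [hσ', hσ]
    · show h i * h' (σ.symm i) = a * b
      rw [hsymm, hh, hh']
  inv_mem' := by
    rintro a ⟨g, hg, h, σ, Hp, hσ, hh⟩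
    have hsymm : σ.symm i = i := by rw [Equiv.symm_apply_eq, hσ]
    refine ⟨g⁻¹, X.inv_mem hg, _, _, pair_inv Hp, hsymm, ?_⟩
    show (h (σ i))⁻¹ = a⁻¹
    rw [hσ, hh]

/-- `K^{Q_i}` as a subgroup. -/
def indKSub : Subgroup (Perm (QA p d)) where
  carrier := indK (X : Set (Perm (VA p d m))) i
  one_mem' := ⟨1, X.one_mem, fun _ => 1, pair_one, rfl⟩
  mul_mem' := by
    rintro a b ⟨g, hg, h, Hp, hh⟩ ⟨g', hg', h', Hp', hh'⟩
    refine ⟨g * g', X.mul_mem hg hg', _, pair1_mul Hp Hp', ?_⟩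
    show h i * h' i = a * b
    rw [hh, hh']
  inv_mem' := by
    rintro a ⟨g, hg, h, Hp, hh⟩
    refine ⟨g⁻¹, X.inv_mem hg, _, pair1_inv Hp, ?_⟩
    show (h i)⁻¹ = a⁻¹
    rw [hh]

lemma indK_subset_indQ :
    indK (X : Set (Perm (VA p d m))) i ⊆ indQ (X : Set (Perm (VA p d m))) i := by
  rintro π ⟨g, hg, h, Hp, hh⟩
  exact ⟨g, hg, h, 1, Hp, rfl, hh⟩

lemma indK_conj {π κ : Perm (QA p d)} (hπ : π ∈ indQ (X : Set (Perm (VA p d m))) i)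
    (hκ : κ ∈ indK (X : Set (Perm (VA p d m))) i) :
    π * κ * π⁻¹ ∈ indK (X : Set (Perm (VA p d m))) i := by
  obtain ⟨g, hg, h, σ, Hp, hσ, hh⟩ := hπ
  obtain ⟨k, hk, hk', Hk, hhk⟩ := hκ
  have hsymm : σ.symm i = i := by rw [Equiv.symm_apply_eq, hσ]
  refine ⟨g * k * g⁻¹, X.mul_mem (X.mul_mem hg hk) (X.inv_mem hg),
    fun j => h j * hk' (σ.symm j) * (h j)⁻¹, ?_, ?_⟩
  · intro α j
    show g (k (g⁻¹ α)) j = h j (hk' (σ.symm j) ((h j)⁻¹ (α j)))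
    rw [pair_apply Hp, pair_apply1 Hk, pair_inv_apply Hp]
    simp only [Equiv.apply_symm_apply]
  · show h i * hk' (σ.symm i) * (h i)⁻¹ = π * κ * π⁻¹
    rw [hsymm, hh, hhk]

/-- components at entry `i` of a subgroup of the base group -/
def compSub (P : Subgroup (Perm (VA p d m))) (i : Fin m) : Subgroup (Perm (QA p d)) where
  carrier := {π | ∃ g ∈ P, ∃ h, IsQAutPair g h 1 ∧ h i = π}
  one_mem' := ⟨1, P.one_mem, fun _ => 1, pair_one, rfl⟩
  mul_mem' := by
    rintro a b ⟨g, hg, h, Hp, hh⟩ ⟨g', hg', h', Hp', hh'⟩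
    refine ⟨g * g', P.mul_mem hg hg', _, pair1_mul Hp Hp', ?_⟩
    show h i * h' i = a * b
    rw [hh, hh']
  inv_mem' := by
    rintro a ⟨g, hg, h, Hp, hh⟩
    refine ⟨g⁻¹, P.inv_mem hg, _, pair1_inv Hp, ?_⟩
    show (h i)⁻¹ = a⁻¹
    rw [hh]

end Groups

theorem stmt2 (p d m : ℕ) (hp : p.Prime) (hd : 1 ≤ d)
    (C : Set (VA p d m)) (X : Subgroup (Perm (VA p d m)))
    (hAff : AlphabetAffine (X : Set (Perm (VA p d m))) C) :
    -- the translation group of `V` is exactly `∏_{i ∈ M} T_i`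
    ((TransSub (VA p d m) : Set (Perm (VA p d m))) =
      {g | ∃ h, IsQAutPair g h 1 ∧ ∀ i, h i ∈ TransSub (QA p d)}) ∧
    -- `T` is a normal `p`-subgroup of `G`
    ((TransSub (VA p d m) : Set (Perm (VA p d m))) ⊆ GProd (X : Set (Perm (VA p d m)))) ∧
    (∀ g ∈ GProd (X : Set (Perm (VA p d m))), ∀ t ∈ TransSub (VA p d m),
      g * t * g⁻¹ ∈ TransSub (VA p d m)) ∧
    IsPGroup p (TransSub (VA p d m)) ∧
    -- `T` contains every normal `p`-subgroup of `G`, i.e. `T = O_p(G)`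
    (∀ P : Subgroup (Perm (VA p d m)),
      (P : Set (Perm (VA p d m))) ⊆ GProd (X : Set (Perm (VA p d m))) →
      IsPGroup p P →
      (∀ g ∈ GProd (X : Set (Perm (VA p d m))), ∀ t ∈ P, g * t * g⁻¹ ∈ P) →
      P ≤ TransSub (VA p d m)) ∧
    -- `T` acts regularly on the vertex set
    (∀ u v : VA p d m, ∃! t : Perm (VA p d m), t ∈ TransSub (VA p d m) ∧ t u = v) := by
  classical
  haveI : Fact p.Prime := ⟨hp⟩
  haveI : NeZero p := ⟨hp.ne_zero⟩
  obtain ⟨hAut, hC, hKne, htrans, haff⟩ := hAff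
  -- Part 1 : characterization of translations of V
  have part1 : (TransSub (VA p d m) : Set (Perm (VA p d m))) =
      {g | ∃ h, IsQAutPair g h 1 ∧ ∀ i, h i ∈ TransSub (QA p d)} := by
    ext g
    constructor
    · rintro ⟨a, ha⟩
      refine ⟨fun i => Equiv.addRight (a i), ?_, fun i => addRight_mem_transSub (a i)⟩
      intro α i
      show g α i = α i + a i
      rw [ha α]
      rfl
    · rintro ⟨h, Hp, hmem⟩
      have hmem' : ∀ i, ∃ c, ∀ v, h i v = v + c := fun i => hmem i
      choose a ha using hmem'
      refine ⟨a, fun v => ?_⟩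
      funext i
      show g v i = (v + a) i
      rw [pair_apply1 Hp v i, ha i (v i)]
      rfl
  -- per-entry 2-transitivity data, in subgroup form
  have h2t : ∀ i, ∀ a b a' b' : QA p d, a ≠ b → a' ≠ b' →
      ∃ π ∈ indQSub X i, π a = a' ∧ π b = b' := fun i => (haff i).1
  have hTQ : ∀ i, (TransSub (QA p d) : Set (Perm (QA p d))) ⊆ ↑(indQSub X i) :=
    fun i => (haff i).2.1
  have hnormTQ : ∀ i, ∀ π ∈ indQSub X i, ∀ t ∈ TransSub (QA p d),
      π * t * π⁻¹ ∈ TransSub (QA p d) := fun i => (haff i).2.2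
  -- K has nontrivial component in every entry
  obtain ⟨g0, hg0K, hg0ne⟩ := hKne
  obtain ⟨hg0X, h0, H0⟩ := hg0K
  have hi0ex : ∃ i0, h0 i0 ≠ 1 := by
    by_contra hcon
    push_neg at hcon
    apply hg0ne
    apply Equiv.ext; intro α
    funext j
    rw [pair_apply1 H0 α j, hcon j]
    rfl
  obtain ⟨i0, hi0⟩ := hi0ex
  have hKQne : ∀ i, ∃ κ, κ ∈ indKSub X i ∧ κ ≠ 1 := by
    intro i
    obtain ⟨g1, hg1, h1, σ, H1, hσ⟩ := htrans i0 i
    have hsymm : σ.symm i = i0 := by rw [Equiv.symm_apply_eq, hσ]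
    refine ⟨h1 i * h0 i0 * (h1 i)⁻¹, ?_, ?_⟩
    · refine ⟨g1 * g0 * g1⁻¹, X.mul_mem (X.mul_mem hg1 hg0X) (X.inv_mem hg1),
        fun j => h1 j * h0 (σ.symm j) * (h1 j)⁻¹, ?_, ?_⟩
      · intro α j
        show g1 (g0 (g1⁻¹ α)) j = h1 j (h0 (σ.symm j) ((h1 j)⁻¹ (α j)))
        rw [pair_apply H1, pair_apply1 H0, pair_inv_apply H1]
        simp only [Equiv.apply_symm_apply]
      · show h1 i * h0 (σ.symm i) * (h1 i)⁻¹ = h1 i * h0 i0 * (h1 i)⁻¹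
        rw [hsymm]
    · intro hcon
      apply hi0
      have hrw : h0 i0 = (h1 i)⁻¹ * (h1 i * h0 i0 * (h1 i)⁻¹) * h1 i := by group
      rw [hrw, hcon]
      group
  -- the translation group of Q is contained in every K^{Q_i}
  have hTK : ∀ i, (TransSub (QA p d) : Set (Perm (QA p d))) ⊆ ↑(indKSub X i) := by
    intro i
    refine lemA (G := indQSub X i) (N := indKSub X i) (h2t i) (hTQ i) (hnormTQ i) ?_ ?_ ?_
    · exact fun π hπ => indK_subset_indQ X i hπ
    · exact fun π hπ κ hκ => indK_conj X i hπ hκ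
    · obtain ⟨κ, hκ, hκ1⟩ := hKQne i
      exact ⟨κ, hκ, hκ1⟩
  -- Part 2
  have part2 : (TransSub (VA p d m) : Set (Perm (VA p d m))) ⊆
      GProd (X : Set (Perm (VA p d m))) := by
    rintro t ⟨a, ha⟩
    refine ⟨fun i => Equiv.addRight (a i), ?_, fun i => hTK i (addRight_mem_transSub (a i))⟩
    intro α i
    show t α i = α i + a i
    rw [ha α]
    rfl
  -- Part 3
  have part3 : ∀ g ∈ GProd (X : Set (Perm (VA p d m))), ∀ t ∈ TransSub (VA p d m),
      g * t * g⁻¹ ∈ TransSub (VA p d m) := by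
    intro g hg t ht
    obtain ⟨h, Hp, hmem⟩ := hg
    obtain ⟨a, ha⟩ := ht
    have hb : ∀ i, ∃ b, ∀ v, (h i * Equiv.addRight (a i) * (h i)⁻¹) v = v + b := by
      intro i
      exact hnormTQ i (h i) (indK_subset_indQ X i (hmem i)) _ (addRight_mem_transSub (a i))
    choose b hb using hb
    refine ⟨b, fun v => ?_⟩
    funext i
    have e2 := hb i (v i)
    have e3 : (h i * Equiv.addRight (a i) * (h i)⁻¹) (v i)
        = h i ((h i)⁻¹ (v i) + a i) := rfl
    rw [e3] at e2
    show g (t (g⁻¹ v)) i = v i + b i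
    rw [pair_apply1 Hp, ha (g⁻¹ v)]
    have e4 : (g⁻¹ v + a) i = (h i)⁻¹ (v i) + a i := by
      have e5 : g⁻¹ v i = (h i)⁻¹ (v i) := pair_apply1 (pair1_inv Hp) v i
      show g⁻¹ v i + a i = (h i)⁻¹ (v i) + a i
      rw [e5]
    rw [e4, e2]
  -- Part 4
  have hA_V : ∀ v : VA p d m, p • v = 0 := by
    intro v
    funext i j
    show p • (v i j) = 0
    rw [nsmul_eq_mul, ZMod.natCast_self, zero_mul]
  have part4 : IsPGroup p (TransSub (VA p d m)) := isPGroup_transSub p hA_V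
  -- Part 5
  have hA_Q : ∀ a : QA p d, p • a = 0 := by
    intro a
    funext j
    show p • (a j) = 0
    rw [nsmul_eq_mul, ZMod.natCast_self, zero_mul]
  have hcardQ : Nat.card (QA p d) = p ^ d := by
    rw [Nat.card_fun, Nat.card_zmod, Nat.card_eq_fintype_card, Fintype.card_fin]
  have part5 : ∀ P : Subgroup (Perm (VA p d m)),
      (P : Set (Perm (VA p d m))) ⊆ GProd (X : Set (Perm (VA p d m))) →
      IsPGroup p P →
      (∀ g ∈ GProd (X : Set (Perm (VA p d m))), ∀ t ∈ P, g * t * g⁻¹ ∈ P) →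
      P ≤ TransSub (VA p d m) := by
    intro P hPG hPp hPnorm g hgP
    obtain ⟨h, Hp, hmemK⟩ := hPG hgP
    have hcomp : ∀ i, h i ∈ TransSub (QA p d) := by
      intro i
      have hSle : compSub P i ≤ indKSub X i := by
        rintro π ⟨g', hg', h', H', hh'⟩
        obtain ⟨h'', H'', hmem''⟩ := hPG hg'
        have heq := pair_eq_at H' H'' i
        rw [← hh', heq]
        exact hmem'' i
      have hSp : IsPGroup p (compSub P i) := by
        rintro ⟨π, hπ⟩
        obtain ⟨g', hg', h', H', hh'⟩ := hπ
        obtain ⟨k, hk⟩ := hPp ⟨g', hg'⟩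
        have hgk : g' ^ p ^ k = 1 := by
          have := congrArg (Subtype.val) hk
          simpa using this
        refine ⟨k, Subtype.ext ?_⟩
        show π ^ p ^ k = 1
        apply Equiv.ext; intro x
        have e1 : (g' ^ p ^ k) (fun _ => x) i = (h' i ^ p ^ k) x :=
          pair_apply1 (pair1_pow H' (p ^ k)) (fun _ => x) i
        rw [hgk] at e1
        rw [← hh', ← e1]
        rfl
      have hSnorm : ∀ κ ∈ indKSub X i, ∀ s ∈ compSub P i,
          κ * s * κ⁻¹ ∈ compSub P i := by
        rintro κ ⟨gk, hgkX, hk, Hk, hhk⟩ s ⟨g', hg', h', H', hh'⟩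
        have hgkG : gk ∈ GProd (X : Set (Perm (VA p d m))) :=
          ⟨hk, Hk, fun j => ⟨gk, hgkX, hk, Hk, rfl⟩⟩
        refine ⟨gk * g' * gk⁻¹, hPnorm gk hgkG g' hg',
          fun j => hk j * h' j * (hk j)⁻¹, ?_, ?_⟩
        · intro α j
          show gk (g' (gk⁻¹ α)) j = hk j (h' j ((hk j)⁻¹ (α j)))
          rw [pair_apply1 Hk, pair_apply1 H', pair_apply1 (pair1_inv Hk)]
        · show hk i * h' i * (hk i)⁻¹ = κ * s * κ⁻¹
          rw [hhk, hh']
      have := lemKey hp hd hcardQ (h2t i) (hTQ i) (hnormTQ i)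
        (fun π hπ => indK_subset_indQ X i hπ)
        (fun π hπ κ hκ => indK_conj X i hπ hκ)
        (fun t ht => hTK i ht)
        hSle hSp hSnorm hA_Q
      exact this ⟨g, hgP, h, Hp, rfl⟩
    have : g ∈ {g : Perm (VA p d m) |
        ∃ h, IsQAutPair g h 1 ∧ ∀ i, h i ∈ TransSub (QA p d)} := ⟨h, Hp, hcomp⟩
    rw [← part1] at this
    exact this
  -- Part 6
  have part6 : ∀ u v : VA p d m,
      ∃! t : Perm (VA p d m), t ∈ TransSub (VA p d m) ∧ t u = v := by
    intro u v
    refine ⟨Equiv.addRight (v - u), ⟨addRight_mem_transSub _, ?_⟩, ?_⟩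
    · show u + (v - u) = v
      abel
    · rintro y ⟨⟨a, hay⟩, hyu⟩
      have huv : u + a = v := by rw [← hay u]; exact hyu
      have haeq : a = v - u := by rw [← huv]; abel
      apply Equiv.ext; intro w
      rw [hay w, haeq]
      rfl
  exact ⟨part1, part2, part3, part4, part5, part6⟩


end Paper
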